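/- Let μ > 0 and let p ∈ V_μ. Then ∑_{n≥0} |n − μ| p_n ≤ 2√2 · μ · √(G[p]). (For integer μ, the left-hand side equals the Wasserstein-1 distance W1(p, δ_μ).) -/
import Mathlib


/-- Cumulative distribution function of a pmf on ℕ: `F n = ∑_{m ≤ n} p m`. -/
noncomputable def cdf (p : ℕ → ℝ) (n : ℕ) : ℝ := ∑ m ∈ Finset.range (n + 1), p m

/-- Wasserstein-1 distance between two pmfs on ℕ, `W1(p,q) = ∑_{n ≥ 0} |F_n - H_n|`. -/
noncomputable def W1 (p q : ℕ → ℝ) : ℝ := ∑' n : ℕ, |cdf p n - cdf q n|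

/-- Gini index of a pmf on ℕ with mean μ: `G[p] = (1/(2μ)) ∑_i ∑_j |i-j| p_i p_j`. -/
noncomputable def Gini (μ : ℝ) (p : ℕ → ℝ) : ℝ :=
  (1 / (2 * μ)) * ∑' i : ℕ, ∑' j : ℕ, |(i : ℝ) - (j : ℝ)| * p i * p j

/-- The shifted Bernoulli distribution with mean μ:
`p*_{⌊μ⌋} = 1 - μ + ⌊μ⌋`, `p*_{⌊μ⌋+1} = μ - ⌊μ⌋`, `p*_n = 0` otherwise. -/
noncomputable def pstar (μ : ℝ) : ℕ → ℝ := fun n =>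
  if n = ⌊μ⌋₊ then 1 - μ + (⌊μ⌋₊ : ℝ)
  else if n = ⌊μ⌋₊ + 1 then μ - (⌊μ⌋₊ : ℝ)
  else 0

/-- The Dirac distribution on ℕ concentrated at `k`. -/
noncomputable def dirac (k : ℕ) : ℕ → ℝ := fun n => if n = k then 1 else 0

theorem gini_aux_stmt3 (μ : ℝ) (hμ : 0 < μ) (p : ℕ → ℝ)
    (hpos : ∀ n, 0 ≤ p n) (hsum : HasSum p 1)
    (hmean : HasSum (fun n : ℕ => (n : ℝ) * p n) μ)
    (G : ℝ) (hG : G = (1 / (2 * μ)) * ∑' i : ℕ, ∑' j : ℕ, |(i : ℝ) - (j : ℝ)| * p i * p j) :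
    (∑' n : ℕ, |(n : ℝ) - μ| * p n) ≤ 2 * Real.sqrt 2 * μ * Real.sqrt G := by
  have hp : Summable p := hsum.summable
  have hnp : Summable (fun n : ℕ => (n : ℝ) * p n) := hmean.summable
  -- bound |n - μ| ≤ n + μ
  have habs : ∀ n : ℕ, |(n : ℝ) - μ| ≤ (n : ℝ) + μ := by
    intro n
    have := abs_sub (n : ℝ) μ
    rw [abs_le]
    constructor <;> nlinarith [abs_nonneg ((n:ℝ) - μ), abs_sub_abs_le_abs_sub (n:ℝ) μ,
      abs_of_nonneg (Nat.cast_nonneg (α := ℝ) n), abs_of_pos hμ, le_abs_self ((n:ℝ) - μ),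
      neg_abs_le ((n:ℝ) - μ)]
  have hsum2 : HasSum (fun n : ℕ => ((n : ℝ) + μ) * p n) (2 * μ) := by
    have h := hmean.add (hsum.mul_left μ)
    have he : (fun n : ℕ => ((n : ℝ) + μ) * p n) = fun n : ℕ => (n : ℝ) * p n + μ * p n := by
      funext n; ring
    rw [he]
    convert h using 1
    ring
  -- summability of D terms
  have hD : Summable (fun n : ℕ => |(n : ℝ) - μ| * p n) := by
    apply Summable.of_nonneg_of_le (fun n => mul_nonneg (abs_nonneg _) (hpos n))
      (fun n => mul_le_mul_of_nonneg_right (habs n) (hpos n)) hsum2.summable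
  set D := ∑' n : ℕ, |(n : ℝ) - μ| * p n with hDdef
  have hDnn : 0 ≤ D := tsum_nonneg (fun n => mul_nonneg (abs_nonneg _) (hpos n))
  have hD2μ : D ≤ 2 * μ := by
    rw [← hsum2.tsum_eq]
    exact Summable.tsum_le_tsum (fun n => mul_le_mul_of_nonneg_right (habs n) (hpos n)) hD hsum2.summable
  -- inner sum
  have hinner_sum : ∀ i : ℕ, Summable (fun j : ℕ => |(i : ℝ) - (j : ℝ)| * p j) := by
    intro i
    apply Summable.of_nonneg_of_le (fun j => mul_nonneg (abs_nonneg _) (hpos j))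
      (fun j => ?_) (((hsum.mul_left (i : ℝ)).add hmean).summable)
    have h1 : |(i : ℝ) - j| ≤ (i : ℝ) + (j : ℝ) := by
      calc |(i : ℝ) - j| ≤ |(i:ℝ)| + |(j:ℝ)| := abs_sub _ _
        _ = (i : ℝ) + (j : ℝ) := by
            rw [abs_of_nonneg (Nat.cast_nonneg _), abs_of_nonneg (Nat.cast_nonneg _)]
    nlinarith [hpos j, mul_le_mul_of_nonneg_right h1 (hpos j)]
  have hinner_le : ∀ i : ℕ, (∑' j : ℕ, |(i : ℝ) - (j : ℝ)| * p j) ≤ (i : ℝ) + μ := by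
    intro i
    have h2 : HasSum (fun j : ℕ => ((i : ℝ) + (j:ℝ)) * p j) ((i:ℝ) * 1 + μ) := by
      have h := (hsum.mul_left (i : ℝ)).add hmean
      have he : (fun j : ℕ => ((i : ℝ) + (j:ℝ)) * p j) = fun j : ℕ => (i:ℝ) * p j + (j:ℝ) * p j := by
        funext j; ring
      rw [he]; exact h
    have := h2.tsum_eq
    calc (∑' j : ℕ, |(i : ℝ) - (j : ℝ)| * p j) ≤ ∑' j : ℕ, ((i : ℝ) + (j:ℝ)) * p j := by
          apply Summable.tsum_le_tsum _ (hinner_sum i) h2.summable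
          intro j
          apply mul_le_mul_of_nonneg_right _ (hpos j)
          calc |(i : ℝ) - j| ≤ |(i:ℝ)| + |(j:ℝ)| := abs_sub _ _
            _ = (i : ℝ) + (j : ℝ) := by
              rw [abs_of_nonneg (Nat.cast_nonneg _), abs_of_nonneg (Nat.cast_nonneg _)]
      _ = (i:ℝ) * 1 + μ := this
      _ = (i:ℝ) + μ := by ring
  have hinner_ge : ∀ i : ℕ, |(i : ℝ) - μ| ≤ ∑' j : ℕ, |(i : ℝ) - (j : ℝ)| * p j := by
    intro i
    have h3 : HasSum (fun j : ℕ => ((i : ℝ) - (j:ℝ)) * p j) ((i:ℝ) * 1 - μ) := by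
      have h := (hsum.mul_left (i : ℝ)).sub hmean
      have he : (fun j : ℕ => ((i : ℝ) - (j:ℝ)) * p j) = fun j : ℕ => (i:ℝ) * p j - (j:ℝ) * p j := by
        funext j; ring
      rw [he]; exact h
    have h4 : |(i:ℝ) * 1 - μ| ≤ ∑' j : ℕ, |(i : ℝ) - (j:ℝ)| * p j := by
      rw [← h3.tsum_eq]
      have hsab : Summable (fun j : ℕ => ‖((i : ℝ) - (j:ℝ)) * p j‖) := by
        apply (hinner_sum i).congr
        intro j
        rw [Real.norm_eq_abs, abs_mul, abs_of_nonneg (hpos j)]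
      have h5 := norm_tsum_le_tsum_norm hsab
      rw [Real.norm_eq_abs] at h5
      refine h5.trans_eq (tsum_congr fun j => ?_)
      rw [Real.norm_eq_abs, abs_mul, abs_of_nonneg (hpos j)]
    simpa [mul_one] using h4
  -- outer
  set g : ℕ → ℝ := fun i => p i * ∑' j : ℕ, |(i : ℝ) - (j : ℝ)| * p j with hgdef
  have hgnn : ∀ i, 0 ≤ g i := fun i =>
    mul_nonneg (hpos i) (tsum_nonneg fun j => mul_nonneg (abs_nonneg _) (hpos j))
  have hgs : Summable g := by
    apply Summable.of_nonneg_of_le hgnn (fun i => ?_) hsum2.summable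
    calc g i ≤ p i * ((i:ℝ) + μ) := mul_le_mul_of_nonneg_left (hinner_le i) (hpos i)
      _ = ((i:ℝ) + μ) * p i := by ring
  have hSg : (∑' i : ℕ, ∑' j : ℕ, |(i : ℝ) - (j : ℝ)| * p i * p j) = ∑' i, g i := by
    apply tsum_congr
    intro i
    rw [hgdef]
    simp only
    rw [← tsum_mul_left]
    apply tsum_congr
    intro j
    ring
  set S := ∑' i, g i with hSdef
  have hSnn : 0 ≤ S := tsum_nonneg hgnn
  have hDS : D ≤ S := by
    apply Summable.tsum_le_tsum _ hD hgs
    intro i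
    calc |(i:ℝ) - μ| * p i = p i * |(i:ℝ) - μ| := by ring
      _ ≤ g i := mul_le_mul_of_nonneg_left (hinner_ge i) (hpos i)
  have hGS : G = S / (2 * μ) := by rw [hG, hSg]; ring
  have hGnn : 0 ≤ G := by rw [hGS]; positivity
  set a := Real.sqrt 2 with ha
  set b := Real.sqrt G with hb
  have ha2 : a * a = 2 := Real.mul_self_sqrt (by norm_num)
  have hb2 : b * b = G := Real.mul_self_sqrt hGnn
  have hann : 0 ≤ a := Real.sqrt_nonneg _
  have hbnn : 0 ≤ b := Real.sqrt_nonneg _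
  have ha1 : 1 ≤ a := by nlinarith
  have hSG : S = 2 * μ * G := by rw [hGS]; field_simp
  have hDb : D ≤ 2 * μ * b := by
    nlinarith [mul_le_mul hD2μ hDS hDnn (by positivity : (0:ℝ) ≤ 2 * μ),
      sq_nonneg (D - 2 * μ * b), mul_pos hμ hμ, mul_nonneg (mul_nonneg hμ.le hμ.le) hbnn]
  calc D ≤ 2 * μ * b := hDb
    _ ≤ 2 * a * μ * b := by nlinarith [mul_nonneg hμ.le hbnn]

theorem stmt_3 (μ : ℝ) (hμ : 0 < μ) (p : ℕ → ℝ)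
    (hpos : ∀ n, 0 ≤ p n) (hsum : HasSum p 1)
    (hmean : HasSum (fun n : ℕ => (n : ℝ) * p n) μ) :
    (∑' n : ℕ, |(n : ℝ) - μ| * p n) ≤ 2 * Real.sqrt 2 * μ * Real.sqrt (Gini μ p) :=
  gini_aux_stmt3 μ hμ p hpos hsum hmean (Gini μ p) rfl
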